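/- There exists a constant c > 0 such that for all sufficiently large n, Σ_{k=1}^{n} (k−1)!·k!·S(n,k)·S(n+1,k) ≥ c · n^{2n+2} / e^{2n}, where S denotes Stirling numbers of the second kind. -/

import Mathlib

def stirling2 : ℕ → ℕ → ℕ
  | 0, 0 => 1
  | 0, _ + 1 => 0
  | _ + 1, 0 => 0
  | n + 1, k + 1 => (k + 1) * stirling2 n (k + 1) + stirling2 n k

lemma s_zero_of_lt : ∀ n k, n < k → stirling2 n k = 0
  | 0, _ + 1, _ => rfl
  | n + 1, k + 1, h => by
    simp [stirling2, s_zero_of_lt n (k + 1) (by omega), s_zero_of_lt n k (by omega)]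

lemma s_diag : ∀ n, stirling2 n n = 1
  | 0 => rfl
  | n + 1 => by simp [stirling2, s_zero_of_lt n (n + 1) (by omega), s_diag n]

lemma s_sub : ∀ n, 2 * stirling2 (n + 1) n = n * (n + 1)
  | 0 => rfl
  | n + 1 => by
    have h := s_sub n
    show 2 * ((n + 1) * stirling2 (n + 1) (n + 1) + stirling2 (n + 1) n) = _
    rw [s_diag]
    nlinarith [h]

theorem lower_bound_asymptotics :
    ∃ c : ℝ, 0 < c ∧ ∃ N : ℕ, ∀ n : ℕ, N ≤ n →
      ((∑ k ∈ Finset.Icc 1 n,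
          Nat.factorial (k - 1) * Nat.factorial k * stirling2 n k * stirling2 (n + 1) k : ℕ) : ℝ) ≥
        c * (n : ℝ) ^ (2 * n + 2) / Real.exp 1 ^ (2 * n) := by
  have hpi : (1 : ℝ) < Real.sqrt Real.pi := by
    rw [show (1 : ℝ) = Real.sqrt 1 by simp]
    exact Real.sqrt_lt_sqrt (by norm_num) (by linarith [Real.pi_gt_three])
  have hev : ∀ᶠ m in Filter.atTop, 1 ≤ Stirling.stirlingSeq m :=
    Stirling.tendsto_stirlingSeq_sqrt_pi.eventually (eventually_ge_nhds hpi)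
  obtain ⟨N₀, hN₀⟩ := Filter.eventually_atTop.mp hev
  refine ⟨1, one_pos, max N₀ 1, fun n hn => ?_⟩
  have h1 : 1 ≤ n := le_trans (le_max_right _ _) hn
  have hx : (0 : ℝ) < (n : ℝ) := by exact_mod_cast h1
  have hsum : Nat.factorial (n - 1) * Nat.factorial n * stirling2 n n * stirling2 (n + 1) n ≤
      ∑ k ∈ Finset.Icc 1 n,
        Nat.factorial (k - 1) * Nat.factorial k * stirling2 n k * stirling2 (n + 1) k :=
    Finset.single_le_sum
      (f := fun k => Nat.factorial (k - 1) * Nat.factorial k * stirling2 n k * stirling2 (n + 1) k)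
      (fun i _ => Nat.zero_le _) (Finset.mem_Icc.mpr ⟨h1, le_refl n⟩)
  have hcast : ((Nat.factorial (n - 1) * Nat.factorial n * stirling2 n n *
      stirling2 (n + 1) n : ℕ) : ℝ) ≤
      ((∑ k ∈ Finset.Icc 1 n,
          Nat.factorial (k - 1) * Nat.factorial k * stirling2 n k * stirling2 (n + 1) k : ℕ) : ℝ) :=
    by exact_mod_cast hsum
  refine le_trans ?_ hcast
  have hsub : (stirling2 (n + 1) n : ℝ) = (n : ℝ) * ((n : ℝ) + 1) / 2 := by
    have h : (2 : ℝ) * (stirling2 (n + 1) n : ℝ) = (n : ℝ) * ((n : ℝ) + 1) := by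
      exact_mod_cast s_sub n
    linarith
  have hfac : (Nat.factorial (n - 1) : ℝ) = (Nat.factorial n : ℝ) / (n : ℝ) := by
    have h : (n : ℝ) * (Nat.factorial (n - 1) : ℝ) = (Nat.factorial n : ℝ) := by
      exact_mod_cast Nat.mul_factorial_pred (show n ≠ 0 by omega)
    field_simp [← h]
    linarith [h]
  have hterm : ((Nat.factorial (n - 1) * Nat.factorial n * stirling2 n n *
      stirling2 (n + 1) n : ℕ) : ℝ) =
      (Nat.factorial n : ℝ) * (Nat.factorial n : ℝ) * ((n : ℝ) + 1) / 2 := by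
    push_cast [s_diag n, hsub, hfac]
    field_simp
  rw [hterm, one_mul]
  have hs : 1 ≤ Stirling.stirlingSeq n := hN₀ n (le_trans (le_max_left _ _) hn)
  have hA : (0 : ℝ) ≤ ((n : ℝ) / Real.exp 1) ^ n := by positivity
  have hd : (0 : ℝ) < Real.sqrt (2 * (n : ℝ)) * ((n : ℝ) / Real.exp 1) ^ n := by
    apply mul_pos (Real.sqrt_pos.mpr (by linarith))
    exact pow_pos (div_pos hx (Real.exp_pos 1)) n
  have hF : Real.sqrt (2 * (n : ℝ)) * ((n : ℝ) / Real.exp 1) ^ n ≤ (Nat.factorial n : ℝ) := by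
    rw [Stirling.stirlingSeq, one_le_div hd] at hs
    exact hs
  have hF2 : 2 * (n : ℝ) * (((n : ℝ) / Real.exp 1) ^ n) ^ 2 ≤ (Nat.factorial n : ℝ) ^ 2 := by
    have h2 : (Real.sqrt (2 * (n : ℝ)) * ((n : ℝ) / Real.exp 1) ^ n) ^ 2 ≤
        (Nat.factorial n : ℝ) ^ 2 := pow_le_pow_left₀ hd.le hF 2
    rw [mul_pow, Real.sq_sqrt (by linarith : (0 : ℝ) ≤ 2 * (n : ℝ))] at h2
    exact h2
  have heq : (n : ℝ) ^ (2 * n + 2) / Real.exp 1 ^ (2 * n) =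
      (n : ℝ) ^ 2 * (((n : ℝ) / Real.exp 1) ^ n) ^ 2 := by
    rw [← pow_mul, div_pow, show 2 * n + 2 = 2 + n * 2 by ring,
      show 2 * n = n * 2 by ring, pow_add]
    ring
  rw [heq]
  nlinarith [mul_le_mul_of_nonneg_right hF2 (show (0 : ℝ) ≤ ((n : ℝ) + 1) / 2 by linarith),
    mul_nonneg (sq_nonneg (((n : ℝ) / Real.exp 1) ^ n)) hx.le,
    sq_nonneg (((n : ℝ) / Real.exp 1) ^ n)]
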